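/- There exists ε ∈ k[[t]] of the form ε = t^{c₀/p}·u with u a unit of k[[t]], such that h(t) − t·ẽxp(ε^p) ∈ t^{1+p·c₀}·k[[t]]. (Proposition 2.1(a).) -/

import Mathlib

section
open Polynomial Finset

/-- Universal truncated exp/log congruence over a field of char `p > 2`. -/
theorem truncExpLog (p : ℕ) [Fact p.Prime] (hp : 2 < p) (k : Type*) [Field k] [CharP k p] :
    (X : k[X]) ^ p ∣
      (∑ i ∈ Finset.range p, C ((i.factorial : k))⁻¹ *
        (∑ j ∈ Finset.range p, C ((j : k)⁻¹ * (-1) ^ (j + 1)) * X ^ j) ^ i) - (1 + X) := by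
  have hprime : p.Prime := Fact.out
  have hcast : ∀ i : ℕ, 0 < i → i < p → (i : k) ≠ 0 := by
    intro i h0 hlt h
    exact Nat.not_dvd_of_pos_of_lt h0 hlt ((CharP.cast_eq_zero_iff k p i).mp h)
  obtain ⟨q, rfl⟩ : ∃ q, p = q + 1 := ⟨p - 1, by omega⟩
  have hq2 : 2 ≤ q := by omega
  set L : k[X] := ∑ j ∈ Finset.range (q + 1), C ((j : k)⁻¹ * (-1) ^ (j + 1)) * X ^ j with hL
  set F : k[X] := ∑ i ∈ Finset.range (q + 1), C ((i.factorial : k))⁻¹ * L ^ i with hF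
  -- derivative of L
  have hL' : derivative L = ∑ j ∈ Finset.range q, (-X : k[X]) ^ j := by
    rw [hL, derivative_sum]
    have h1 : ∀ i ∈ Finset.range (q + 1),
        derivative (C ((i : k)⁻¹ * (-1) ^ (i + 1)) * X ^ i)
          = C ((i : k)⁻¹ * (-1) ^ (i + 1) * i) * X ^ (i - 1) := by
      intro i _
      rw [derivative_C_mul, derivative_X_pow, ← mul_assoc, ← C_mul]
    rw [Finset.sum_congr rfl h1, Finset.sum_range_succ']
    simp only [Nat.cast_zero, mul_zero, map_zero, zero_mul, add_zero]
    refine Finset.sum_congr rfl fun j hj => ?_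
    have hj' : j < q := Finset.mem_range.mp hj
    have h2 : ((j + 1 : ℕ) : k) ≠ 0 := hcast _ (by omega) (by omega)
    have h2' : ((j : k) + 1) ≠ 0 := by push_cast at h2; exact h2
    have h3 : (((j + 1 : ℕ) : k))⁻¹ * (-1) ^ (j + 1 + 1) * ((j + 1 : ℕ) : k) = (-1 : k) ^ j := by
      rw [pow_succ, pow_succ]
      field_simp
    rw [h3, Nat.add_sub_cancel, map_pow, map_neg, map_one, ← neg_pow (X : k[X]) j]
  have hev : Even q := by
    obtain ⟨m, hm⟩ := hprime.odd_of_ne_two (by omega)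
    exact ⟨m, by omega⟩
  have hgeom : derivative L * (1 + X) = 1 - X ^ q := by
    have h := geom_sum_mul (-X : k[X]) q
    rw [hev.neg_pow] at h
    rw [hL']
    linear_combination -h
  have hfactne : ∀ j : ℕ, j < q + 1 → ((j.factorial : k)) ≠ 0 := by
    intro j hj h
    have hd : (q + 1) ∣ j.factorial := (CharP.cast_eq_zero_iff k (q + 1) _).mp h
    have := (Nat.Prime.dvd_factorial hprime).mp hd
    omega
  set S : k[X] := ∑ j ∈ Finset.range q, C ((j.factorial : k))⁻¹ * L ^ j with hSdef
  have hF' : derivative F = S * derivative L := by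
    rw [hF, derivative_sum]
    have h1 : ∀ i ∈ Finset.range (q + 1), derivative (C ((i.factorial : k))⁻¹ * L ^ i)
        = C ((i.factorial : k))⁻¹ * (C (i : k) * L ^ (i - 1) * derivative L) := by
      intro i _
      rw [derivative_C_mul, derivative_pow]
    rw [Finset.sum_congr rfl h1, Finset.sum_range_succ']
    simp only [Nat.cast_zero, map_zero, zero_mul, mul_zero, add_zero]
    rw [hSdef, Finset.sum_mul]
    refine Finset.sum_congr rfl fun j hj => ?_
    have hj' : j < q := Finset.mem_range.mp hj
    have h2 : ((j + 1 : ℕ) : k) ≠ 0 := hcast _ (by omega) (by omega)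
    have h3 : (((j + 1).factorial : k))⁻¹ * ((j + 1 : ℕ) : k) = ((j.factorial : k))⁻¹ := by
      rw [Nat.factorial_succ, Nat.cast_mul, mul_inv, mul_comm (((j + 1 : ℕ) : k))⁻¹,
        mul_assoc, inv_mul_cancel₀ h2, mul_one]
    rw [Nat.add_sub_cancel, ← mul_assoc, ← mul_assoc, ← C_mul, h3]
  have hXL : X ∣ L := by
    rw [hL]
    refine Finset.dvd_sum fun i _ => ?_
    rcases Nat.eq_zero_or_pos i with rfl | h
    · simp
    · exact Dvd.dvd.mul_left (dvd_pow_self X (Nat.pos_iff_ne_zero.mp h)) _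
  obtain ⟨M, hM⟩ := hXL
  have hLq : L ^ q = X ^ q * M ^ q := by rw [hM, mul_pow]
  have hS : F = S + C ((q.factorial : k))⁻¹ * L ^ q := by
    rw [hF, hSdef, Finset.sum_range_succ]
  have key : (1 + X) * derivative F - F
      = X ^ q * (-F - C ((q.factorial : k))⁻¹ * M ^ q * (1 - X ^ q)) := by
    have e5 : (1 + X) * derivative F = S * (1 - X ^ q) := by
      rw [hF', mul_comm (1 + X), mul_assoc, hgeom]
    rw [e5, hS, hLq]
    ring
  obtain ⟨D, hD⟩ : ∃ D : k[X], D = F - 1 - X := ⟨_, rfl⟩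
  have hDrel : (1 + X) * derivative D - D
      = X ^ q * (-F - C ((q.factorial : k))⁻¹ * M ^ q * (1 - X ^ q)) := by
    rw [← key, hD]
    simp only [derivative_sub, derivative_one, derivative_X]
    ring
  have hD0 : D.coeff 0 = 0 := by
    have hL0 : L.eval 0 = 0 := by rw [hM]; simp
    have hF0 : F.eval 0 = 1 := by
      rw [hF, Polynomial.eval_finset_sum, Finset.sum_eq_single 0]
      · simp
      · intro i _ h0
        simp [hL0, zero_pow h0]
      · intro h
        exact absurd (Finset.mem_range.mpr (by omega)) h
    rw [hD, Polynomial.coeff_zero_eq_eval_zero]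
    simp [hF0]
  have hind : ∀ n, n ≤ q → D.coeff n = 0 := by
    intro n
    induction n with
    | zero => intro _; exact hD0
    | succ m ih =>
      intro hn
      have hdm : D.coeff m = 0 := ih (by omega)
      have hc0 : ((1 + X) * derivative D - D).coeff m = 0 := by
        rw [hDrel]
        exact Polynomial.X_pow_dvd_iff.mp (dvd_mul_right _ _) m (by omega)
      have hc : (derivative D).coeff m + (X * derivative D).coeff m - D.coeff m = 0 := by
        rw [← hc0, show (1 + X) * derivative D = derivative D + X * derivative D from by ring,
          Polynomial.coeff_sub, Polynomial.coeff_add]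
      have hXD : (X * derivative D).coeff m = 0 := by
        cases m with
        | zero => simp [Polynomial.mul_coeff_zero]
        | succ i =>
          rw [Polynomial.coeff_X_mul, Polynomial.coeff_derivative, hdm, zero_mul]
      have h4 : (derivative D).coeff m = 0 := by
        rw [hXD, hdm] at hc
        simpa using hc
      rw [Polynomial.coeff_derivative] at h4
      have h5 : ((m : k) + 1) ≠ 0 := by
        have := hcast (m + 1) (by omega) (by omega)
        push_cast at this
        exact this
      exact (mul_eq_zero.mp h4).resolve_right h5
  have hdvd : (X : k[X]) ^ (q + 1) ∣ D :=
    Polynomial.X_pow_dvd_iff.mpr fun d hd => hind d (by omega)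
  have hDeq : F - (1 + X) = D := by rw [hD]; ring
  rwa [hDeq]

end

section
open PowerSeries

/-- **Proposition 2.1 (a).** Let `k` be a finite field of characteristic `p > 2`, `c₀ ∈ pℕ`,
and `h` the automorphism of `k[[t]]` with `h(t) = t(1 + Σ_{i≥0} α_i t^{c₀+pi})`, `α₀ ≠ 0`.
There is `ε ∈ t^{c₀/p}·k[[t]]ˣ` such that `h(t) ≡ t·ẽxp(ε^p) mod t^{1+pc₀}`, where
`ẽxp(X) = Σ_{0≤i<p} X^i/i!` is the truncated exponential. -/
theorem stmt_1 (p : ℕ) [Fact p.Prime] (hp : 2 < p)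
    (k : Type*) [Field k] [Finite k] [CharP k p]
    (c₀ : ℕ) (hc₀ : 0 < c₀) (hpc₀ : p ∣ c₀)
    (α : ℕ → k) (hα : α 0 ≠ 0) :
    ∃ (ε : PowerSeries k) (u : (PowerSeries k)ˣ),
      ε = PowerSeries.X ^ (c₀ / p) * (u : PowerSeries k) ∧
      PowerSeries.X * (1 + PowerSeries.mk fun n =>
            if c₀ ≤ n ∧ p ∣ n - c₀ then α ((n - c₀) / p) else 0) -
        PowerSeries.X * (∑ i ∈ Finset.range p, (Nat.factorial i : k)⁻¹ • (ε ^ p) ^ i)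
          ∈ Ideal.span {(PowerSeries.X : PowerSeries k) ^ (1 + p * c₀)} := by
  classical
  have hprime : p.Prime := Fact.out
  haveI : CharP (PowerSeries k) p :=
    charP_of_injective_ringHom (f := (PowerSeries.C : k →+* PowerSeries k))
      (fun a b hab => by simpa using congrArg (constantCoeff) hab) p
  set w : PowerSeries k := PowerSeries.mk fun n =>
      if c₀ ≤ n ∧ p ∣ n - c₀ then α ((n - c₀) / p) else 0 with hw
  have hwc : ∀ n, coeff n w = if c₀ ≤ n ∧ p ∣ n - c₀ then α ((n - c₀) / p) else 0 :=
    fun n => coeff_mk n _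
  have hwlow : ∀ n, n < c₀ → coeff n w = 0 := by
    intro n hn
    rw [hwc, if_neg]
    rintro ⟨h1, -⟩
    omega
  have hXw : (X : PowerSeries k) ^ c₀ ∣ w := X_pow_dvd_iff.mpr hwlow
  have hwsupp : ∀ n, ¬ p ∣ n → coeff n w = 0 := by
    intro n hn
    rw [hwc, if_neg]
    rintro ⟨h1, h2⟩
    exact hn (by rw [← Nat.sub_add_cancel h1]; exact Nat.dvd_add h2 hpc₀)
  have hwpow : ∀ i n, ¬ p ∣ n → coeff n (w ^ i) = 0 := by
    intro i
    induction i with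
    | zero =>
      intro n hn
      rw [pow_zero, coeff_one, if_neg]
      rintro rfl
      exact hn (dvd_zero p)
    | succ i ih =>
      intro n hn
      rw [pow_succ, coeff_mul]
      refine Finset.sum_eq_zero fun ab hab => ?_
      have hadd : ab.1 + ab.2 = n := Finset.HasAntidiagonal.mem_antidiagonal.mp hab
      by_cases h1 : p ∣ ab.1
      · have h2 : ¬ p ∣ ab.2 := fun h => hn (hadd ▸ Nat.dvd_add h1 h)
        rw [hwsupp _ h2, mul_zero]
      · rw [ih _ h1, zero_mul]
  set f : PowerSeries k := Polynomial.aeval w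
      (∑ j ∈ Finset.range p, Polynomial.C ((j : k)⁻¹ * (-1) ^ (j + 1)) * Polynomial.X ^ j) with hf
  have hfsum : f = ∑ j ∈ Finset.range p,
      PowerSeries.C ((j : k)⁻¹ * (-1) ^ (j + 1)) * w ^ j := by
    rw [hf, map_sum]
    refine Finset.sum_congr rfl fun j _ => ?_
    rw [map_mul, map_pow, Polynomial.aeval_X, Polynomial.aeval_C]
    simp [PowerSeries.algebraMap_apply]
  have hfsupp : ∀ n, ¬(c₀ ≤ n ∧ p ∣ n - c₀) → coeff n f = 0 := by
    intro n hn
    have hcases : ¬ p ∣ n ∨ n < c₀ := by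
      by_contra h
      push_neg at h
      obtain ⟨h1, h2⟩ := h
      exact hn ⟨h2, Nat.dvd_sub h1 hpc₀⟩
    rw [hfsum, map_sum]
    refine Finset.sum_eq_zero fun j hj => ?_
    rcases hcases with hnd | hlow
    · rw [PowerSeries.coeff_C_mul, hwpow j n hnd, mul_zero]
    · rcases Nat.eq_zero_or_pos j with rfl | hjpos
      · simp
      · have hd : (X : PowerSeries k) ^ c₀ ∣ w ^ j :=
          dvd_trans hXw (dvd_pow_self w hjpos.ne')
        rw [PowerSeries.coeff_C_mul, X_pow_dvd_iff.mp hd n hlow, mul_zero]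
  have hfc : coeff c₀ f = α 0 := by
    rw [hfsum, map_sum, Finset.sum_eq_single 1]
    · rw [PowerSeries.coeff_C_mul, pow_one, hwc, if_pos ⟨le_refl c₀, by simp⟩]
      simp
    · intro j hj hne
      rcases Nat.eq_zero_or_pos j with rfl | hjpos
      · simp
      · have hj2 : 2 ≤ j := by omega
        have hd : (X : PowerSeries k) ^ (2 * c₀) ∣ w ^ j := by
          calc (X : PowerSeries k) ^ (2 * c₀) = (X ^ c₀) ^ 2 := by rw [← pow_mul, mul_comm]
            _ ∣ w ^ 2 := pow_dvd_pow_of_dvd hXw 2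
            _ ∣ w ^ j := pow_dvd_pow w hj2
        rw [PowerSeries.coeff_C_mul, X_pow_dvd_iff.mp hd c₀ (by omega), mul_zero]
    · intro h
      exact absurd (Finset.mem_range.mpr (by omega)) h
  set b : ℕ → k := fun j => (frobeniusEquiv k p).symm (coeff (c₀ + p * j) f) with hb
  have hbp : ∀ j, b j ^ p = coeff (c₀ + p * j) f := by
    intro j
    have h := frobenius_apply_frobeniusEquiv_symm k p (coeff (c₀ + p * j) f)
    rwa [frobenius_def] at h
  set v : PowerSeries k := ∑ j ∈ Finset.range c₀, PowerSeries.C (b j) * X ^ j with hv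
  have hv0 : constantCoeff v = b 0 := by
    rw [hv, map_sum, Finset.sum_eq_single 0]
    · simp
    · intro j _ hj
      simp [constantCoeff_X, zero_pow hj]
    · intro h
      exact absurd (Finset.mem_range.mpr hc₀) h
  have hb0 : b 0 ≠ 0 := by
    intro h
    have h1 := hbp 0
    rw [h, zero_pow hprime.ne_zero, mul_zero, add_zero, hfc] at h1
    exact hα h1.symm
  have hvunit : IsUnit v := by
    rw [PowerSeries.isUnit_iff_constantCoeff, hv0]
    exact isUnit_iff_ne_zero.mpr hb0
  set ε : PowerSeries k := X ^ (c₀ / p) * v with hε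
  have hεp : ε ^ p = ∑ j ∈ Finset.range c₀,
      PowerSeries.C (coeff (c₀ + p * j) f) * X ^ (c₀ + p * j) := by
    rw [hε, mul_pow, ← pow_mul, Nat.div_mul_cancel hpc₀, hv, sum_pow_char, Finset.mul_sum]
    refine Finset.sum_congr rfl fun j _ => ?_
    calc (X : PowerSeries k) ^ c₀ * (PowerSeries.C (b j) * X ^ j) ^ p
        = PowerSeries.C (b j ^ p) * (X ^ c₀ * X ^ (j * p)) := by
          rw [mul_pow, ← pow_mul, map_pow]; ring
      _ = PowerSeries.C (coeff (c₀ + p * j) f) * X ^ (c₀ + p * j) := by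
          rw [hbp, ← pow_add, mul_comm j p]
  have hdvd1 : (X : PowerSeries k) ^ (p * c₀) ∣ f - ε ^ p := by
    rw [X_pow_dvd_iff]
    intro n hn
    rw [map_sub, hεp, map_sum]
    by_cases hcase : c₀ ≤ n ∧ p ∣ n - c₀
    · obtain ⟨h1, h2⟩ := hcase
      obtain ⟨j₀, hj₀⟩ := h2
      have hn0 : n = c₀ + p * j₀ := by omega
      have hj₀lt : j₀ < c₀ := by
        have hmul : p * j₀ < p * c₀ := by omega
        exact Nat.lt_of_mul_lt_mul_left hmul
      rw [Finset.sum_eq_single j₀]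
      · rw [PowerSeries.coeff_C_mul, coeff_X_pow, if_pos hn0, mul_one, hn0, sub_self]
      · intro j _ hne
        rw [PowerSeries.coeff_C_mul, coeff_X_pow, if_neg (fun h => hne (Nat.eq_of_mul_eq_mul_left (show 0 < p by omega) (show p * j = p * j₀ by omega))), mul_zero]
      · intro h
        exact absurd (Finset.mem_range.mpr hj₀lt) h
    · rw [hfsupp n hcase, Finset.sum_eq_zero, sub_zero]
      intro j hj
      rw [PowerSeries.coeff_C_mul, coeff_X_pow, if_neg, mul_zero]
      intro h
      exact hcase ⟨by omega, ⟨j, by omega⟩⟩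
  set Ef : PowerSeries k := ∑ i ∈ Finset.range p,
      PowerSeries.C ((i.factorial : k))⁻¹ * f ^ i with hEf
  set Eε : PowerSeries k := ∑ i ∈ Finset.range p,
      PowerSeries.C ((i.factorial : k))⁻¹ * (ε ^ p) ^ i with hEε
  have hdvd2 : (X : PowerSeries k) ^ (p * c₀) ∣ Ef - Eε := by
    rw [hEf, hEε, ← Finset.sum_sub_distrib]
    refine Finset.dvd_sum fun i _ => ?_
    rw [← mul_sub]
    exact Dvd.dvd.mul_left (dvd_trans hdvd1 (sub_dvd_pow_sub_pow f (ε ^ p) i)) _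
  have hdvd3 : (X : PowerSeries k) ^ (p * c₀) ∣ Ef - (1 + w) := by
    have hA := truncExpLog p hp k
    have hmap := map_dvd (Polynomial.aeval w) hA
    rw [map_pow, Polynomial.aeval_X, map_sub, map_add, map_one, Polynomial.aeval_X,
      map_sum] at hmap
    have hterm : ∀ i ∈ Finset.range p, (Polynomial.aeval w)
        (Polynomial.C ((i.factorial : k))⁻¹ *
          (∑ j ∈ Finset.range p, Polynomial.C ((j : k)⁻¹ * (-1) ^ (j + 1)) * Polynomial.X ^ j) ^ i)
        = PowerSeries.C ((i.factorial : k))⁻¹ * f ^ i := by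
      intro i _
      rw [map_mul, map_pow, ← hf, Polynomial.aeval_C]
      simp [PowerSeries.algebraMap_apply]
    rw [Finset.sum_congr rfl hterm] at hmap
    have hwp : (X : PowerSeries k) ^ (p * c₀) ∣ w ^ p := by
      rw [mul_comm p c₀, pow_mul]
      exact pow_dvd_pow_of_dvd hXw p
    exact dvd_trans hwp hmap
  have hdvd4 : (X : PowerSeries k) ^ (p * c₀) ∣ (1 + w) - Eε := by
    have h := dvd_sub hdvd2 hdvd3
    rwa [show Ef - Eε - (Ef - (1 + w)) = 1 + w - Eε from by ring] at h
  refine ⟨ε, hvunit.unit, by rw [hε, IsUnit.unit_spec], ?_⟩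
  rw [Ideal.mem_span_singleton]
  have hgoal : X * (1 + w) - X * (∑ i ∈ Finset.range p, (Nat.factorial i : k)⁻¹ • (ε ^ p) ^ i)
      = X * ((1 + w) - Eε) := by
    rw [hEε, ← mul_sub]
    congr 2
    refine Finset.sum_congr rfl fun i _ => ?_
    rw [PowerSeries.smul_eq_C_mul]
  rw [hgoal, pow_add, pow_one]
  exact mul_dvd_mul_left X hdvd4

end
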